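/- Let M be a matroid with rank function r on a finite ground set 𝒳, ≻ a strict linear order on 𝒳, q a natural number, and G ⊆ 𝒳 a set of guaranteed contracts with |G| ≤ q. There exists exactly one choice rule C on 𝒳 satisfying all of: (i) guaranteed enrollment: A ∩ G ⊆ C(A) for every A ⊆ 𝒳; (ii) maximal utilization of reservations: for every A ⊆ 𝒳 and x ∈ A \ C(A), if |C(A)| < q then r(C(A) ∪ {x}) = r(C(A)), and if |C(A)| = q then for every y ∈ C(A) \ G, r((C(A) \ {y}) ∪ {x}) ≤ r(C(A)); (iii) no justified envy under reserves: for every A ⊆ 𝒳, x ∈ C(A) \ G, and y ∈ A \ C(A), if y ≻ x then r((C(A) \ {x}) ∪ {y}) < r(C(A)); (iv) non-wastefulness: |C(A)| = min(|A|, q) for every A ⊆ 𝒳. -/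

import Mathlib

/-- A matroid on the finite ground set `α`, given by its independent sets. -/
structure FinMatroid (α : Type*) [DecidableEq α] where
  Indep : Finset α → Prop
  indep_empty : Indep ∅
  indep_subset : ∀ ⦃A B : Finset α⦄, Indep B → A ⊆ B → Indep A
  indep_exchange : ∀ ⦃A B : Finset α⦄, Indep A → Indep B → A.card < B.card →
    ∃ x ∈ B, x ∉ A ∧ Indep (insert x A)

open Classical in
/-- The rank of a set: the common cardinality of its maximal independent
subsets. -/
noncomputable def FinMatroid.rank {α : Type*} [DecidableEq α]
    (M : FinMatroid α) (X : Finset α) : ℕ :=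
  (X.powerset.filter fun A => M.Indep A).sup Finset.card

/-- `Y` is a basis of `X`: a maximal independent subset of `X`. -/
def FinMatroid.IsBasisOf {α : Type*} [DecidableEq α]
    (M : FinMatroid α) (Y X : Finset α) : Prop :=
  Y ⊆ X ∧ M.Indep Y ∧ ∀ Z : Finset α, Z ⊆ X → M.Indep Z → Y ⊆ Z → Z = Y

namespace FinMatroid

variable {α : Type*} [DecidableEq α] (M : FinMatroid α)

lemma indep_card_le_rank {I X : Finset α} (hI : M.Indep I) (hIX : I ⊆ X) :
    I.card ≤ M.rank X := by
  classical
  unfold FinMatroid.rank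
  refine Finset.le_sup ?_
  simp only [Finset.mem_filter, Finset.mem_powerset]
  exact ⟨hIX, hI⟩

lemma exists_basis (X : Finset α) :
    ∃ B, B ⊆ X ∧ M.Indep B ∧ B.card = M.rank X := by
  classical
  obtain ⟨B, hBmem, hBsup⟩ := Finset.exists_mem_eq_sup
    (X.powerset.filter fun A => M.Indep A) ⟨∅, by simp [M.indep_empty]⟩ Finset.card
  simp only [Finset.mem_filter, Finset.mem_powerset] at hBmem
  refine ⟨B, hBmem.1, hBmem.2, ?_⟩
  unfold FinMatroid.rank
  rw [← hBsup]

lemma rank_le_card (X : Finset α) : M.rank X ≤ X.card := by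
  obtain ⟨B, hBX, _, hBc⟩ := M.exists_basis X
  rw [← hBc]; exact Finset.card_le_card hBX

lemma rank_mono {X Y : Finset α} (h : X ⊆ Y) : M.rank X ≤ M.rank Y := by
  obtain ⟨B, hBX, hBi, hBc⟩ := M.exists_basis X
  rw [← hBc]; exact M.indep_card_le_rank hBi (hBX.trans h)

lemma rank_indep {I : Finset α} (hI : M.Indep I) : M.rank I = I.card :=
  le_antisymm (M.rank_le_card I) (M.indep_card_le_rank hI Finset.Subset.rfl)

lemma augment {I X : Finset α} (hI : M.Indep I) (hIX : I ⊆ X)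
    (h : I.card < M.rank X) : ∃ e ∈ X, e ∉ I ∧ M.Indep (insert e I) := by
  obtain ⟨B, hBX, hBi, hBc⟩ := M.exists_basis X
  obtain ⟨e, heB, heI, hei⟩ := M.indep_exchange hI hBi (by omega)
  exact ⟨e, hBX heB, heI, hei⟩

lemma extend_card {I X : Finset α} {s : ℕ} (hI : M.Indep I) (hIX : I ⊆ X)
    (hs : I.card ≤ s) (hsr : s ≤ M.rank X) :
    ∃ J, I ⊆ J ∧ J ⊆ X ∧ M.Indep J ∧ J.card = s := by
  classical
  suffices h : ∀ d (I : Finset α), M.Indep I → I ⊆ X → I.card ≤ s → s - I.card = d →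
      ∃ J, I ⊆ J ∧ J ⊆ X ∧ M.Indep J ∧ J.card = s from
    h _ I hI hIX hs rfl
  intro d
  induction d with
  | zero =>
    intro I hI hIX hs hd
    exact ⟨I, Finset.Subset.rfl, hIX, hI, by omega⟩
  | succ n ih =>
    intro I hI hIX hs hd
    obtain ⟨e, heX, heI, hei⟩ := M.augment hI hIX (by omega)
    obtain ⟨J, hJ1, hJ2, hJ3, hJ4⟩ := ih (insert e I) hei
      (Finset.insert_subset heX hIX)
      (by rw [Finset.card_insert_of_notMem heI]; omega)
      (by rw [Finset.card_insert_of_notMem heI]; omega)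
    exact ⟨J, (Finset.subset_insert e I).trans hJ1, hJ2, hJ3, hJ4⟩

lemma rank_insert_le (x : α) (X : Finset α) :
    M.rank (insert x X) ≤ M.rank X + 1 := by
  obtain ⟨B, hBX, hBi, hBc⟩ := M.exists_basis (insert x X)
  have h1 : B.erase x ⊆ X := by
    intro u hu
    rcases Finset.mem_insert.mp (hBX (Finset.mem_of_mem_erase hu)) with rfl | h
    · exact absurd rfl (Finset.ne_of_mem_erase hu)
    · exact h
  have h2 : (B.erase x).card ≤ M.rank X :=
    M.indep_card_le_rank (M.indep_subset hBi (Finset.erase_subset x B)) h1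
  have h3 : B.card ≤ (B.erase x).card + 1 := by
    by_cases hx : x ∈ B
    · rw [Finset.card_erase_of_mem hx]; omega
    · rw [Finset.erase_eq_of_notMem hx]; omega
  omega

lemma rank_le_rank_insert (x : α) (X : Finset α) :
    M.rank X ≤ M.rank (insert x X) :=
  M.rank_mono (Finset.subset_insert x X)

/-- x is spanned by X -/
def Spanned (x : α) (X : Finset α) : Prop := M.rank (insert x X) = M.rank X

lemma spanned_or (x : α) (X : Finset α) :
    M.Spanned x X ∨ M.rank (insert x X) = M.rank X + 1 := by
  have h1 := M.rank_le_rank_insert x X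
  have h2 := M.rank_insert_le x X
  unfold Spanned; omega

lemma spanned_of_mem {x : α} {X : Finset α} (h : x ∈ X) : M.Spanned x X := by
  unfold Spanned; rw [Finset.insert_eq_self.mpr h]

lemma indep_insert_basis {x : α} {X B : Finset α}
    (hrk : M.rank (insert x X) = M.rank X + 1)
    (hB : B ⊆ X) (hBi : M.Indep B) (hBc : B.card = M.rank X) :
    M.Indep (insert x B) := by
  obtain ⟨e, heX, heB, hei⟩ := M.augment hBi (hB.trans (Finset.subset_insert x X))
    (by omega)
  rcases Finset.mem_insert.mp heX with rfl | heX'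
  · exact hei
  · exfalso
    have h1 : insert e B ⊆ X := Finset.insert_subset heX' hB
    have h2 := M.indep_card_le_rank hei h1
    rw [Finset.card_insert_of_notMem heB] at h2
    omega

lemma spanned_mono {x : α} {X Y : Finset α} (h : M.Spanned x X) (hXY : X ⊆ Y) :
    M.Spanned x Y := by
  by_cases hxY : x ∈ Y
  · exact M.spanned_of_mem hxY
  rcases M.spanned_or x Y with hs | hs
  · exact hs
  exfalso
  have hxX : x ∉ X := fun hx => hxY (hXY hx)
  obtain ⟨B, hBX, hBi, hBc⟩ := M.exists_basis X
  obtain ⟨B', hBB', hB'Y, hB'i, hB'c⟩ := M.extend_card hBi (hBX.trans hXY)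
    (hBc ▸ M.rank_mono hXY) le_rfl
  have h1 : M.Indep (insert x B') := M.indep_insert_basis hs hB'Y hB'i hB'c
  have h2 : M.Indep (insert x B) :=
    M.indep_subset h1 (Finset.insert_subset_insert x hBB')
  have h3 : insert x B ⊆ insert x X := Finset.insert_subset_insert x hBX
  have h4 := M.indep_card_le_rank h2 h3
  have h5 : x ∉ B := fun hx => hxX (hBX hx)
  rw [Finset.card_insert_of_notMem h5] at h4
  unfold Spanned at h
  omega

lemma rank_union_spanned {X Y : Finset α} (h : ∀ u ∈ Y, M.Spanned u X) :
    M.rank (X ∪ Y) = M.rank X := by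
  classical
  induction Y using Finset.induction with
  | empty => simp
  | @insert a s ha ih =>
    have h1 : X ∪ insert a s = insert a (X ∪ s) := Finset.union_insert _ _ _
    have h2 : M.Spanned a (X ∪ s) :=
      M.spanned_mono (h a (Finset.mem_insert_self a s)) Finset.subset_union_left
    rw [h1, h2, ih fun u hu => h u (Finset.mem_insert_of_mem hu)]

lemma rank_insert_union_spanned {z : α} {X Y : Finset α}
    (hz : M.rank (insert z X) = M.rank X + 1) (h : ∀ u ∈ Y, M.Spanned u X) :
    M.rank (insert z (X ∪ Y)) = M.rank (X ∪ Y) + 1 := by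
  have h2 : ∀ u ∈ Y, M.Spanned u (insert z X) :=
    fun u hu => M.spanned_mono (h u hu) (Finset.subset_insert _ _)
  rw [M.rank_union_spanned h, ← Finset.insert_union, M.rank_union_spanned h2, hz]

lemma rank_le_rank_erase_add_one (y : α) (X : Finset α) :
    M.rank X ≤ M.rank (X.erase y) + 1 := by
  obtain ⟨B, hBX, hBi, hBc⟩ := M.exists_basis X
  have h1 : B.erase y ⊆ X.erase y := Finset.erase_subset_erase y hBX
  have h2 := M.indep_card_le_rank (M.indep_subset hBi (Finset.erase_subset y B)) h1
  have h3 : B.card ≤ (B.erase y).card + 1 := by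
    by_cases hy : y ∈ B
    · rw [Finset.card_erase_of_mem hy]; omega
    · rw [Finset.erase_eq_of_notMem hy]; omega
  omega

lemma rank_union_le (X Y : Finset α) : M.rank (X ∪ Y) ≤ M.rank X + Y.card := by
  classical
  induction Y using Finset.induction with
  | empty => simp
  | @insert a s ha ih =>
    have h1 : X ∪ insert a s = insert a (X ∪ s) := Finset.union_insert _ _ _
    have h2 := M.rank_insert_le a (X ∪ s)
    rw [Finset.card_insert_of_notMem ha, h1]
    omega

end FinMatroid

section Greedy

open FinMatroid

variable {α : Type*} [LinearOrder α]

/-- one step of the phase-1 greedy -/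
noncomputable def gstep (M : FinMatroid α) (q : ℕ) (S : Finset α) (z : α) : Finset α :=
  if S.card < q ∧ M.rank (insert z S) = M.rank S + 1 then insert z S else S

lemma foldl_master (M : FinMatroid α) (q : ℕ) :
    ∀ (l : List α) (S : Finset α), l.Pairwise (· > ·) → (∀ z ∈ l, z ∉ S) → S.card ≤ q →
    S ⊆ l.foldl (gstep M q) S ∧
    l.foldl (gstep M q) S ⊆ S ∪ l.toFinset ∧
    (l.foldl (gstep M q) S).card ≤ q ∧
    (∀ z ∈ l, z ∉ l.foldl (gstep M q) S →
      q ≤ (S ∪ (l.foldl (gstep M q) S).filter (z < ·)).card ∨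
      M.Spanned z (S ∪ (l.foldl (gstep M q) S).filter (z < ·))) ∧
    (∀ z ∈ l, z ∈ l.foldl (gstep M q) S →
      (S ∪ (l.foldl (gstep M q) S).filter (z < ·)).card < q ∧
      M.rank (insert z (S ∪ (l.foldl (gstep M q) S).filter (z < ·)))
        = M.rank (S ∪ (l.foldl (gstep M q) S).filter (z < ·)) + 1) ∧
    (∀ B, B ⊆ S → M.Indep B → B.card = M.rank S →
      M.Indep (B ∪ (l.foldl (gstep M q) S \ S)) ∧
      M.rank (l.foldl (gstep M q) S) = M.rank S + (l.foldl (gstep M q) S \ S).card) := by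
  intro l
  induction l with
  | nil =>
    intro S _ _ hcard
    simp only [List.foldl_nil, List.toFinset_nil, Finset.union_empty, Finset.sdiff_self,
      List.not_mem_nil, false_implies, implies_true, and_true, true_and]
    refine ⟨Finset.Subset.rfl, Finset.Subset.rfl, hcard, fun B hBS hBi hBc => ?_⟩
    exact ⟨by simpa using hBi, by simp⟩
  | cons z rest ih =>
    intro S hsort hdisj hcard
    simp only [List.foldl_cons]
    have hzrest : ∀ w ∈ rest, z > w := fun w hw => List.rel_of_pairwise_cons hsort hw
    have hznotrest : z ∉ rest := fun h => lt_irrefl z (hzrest z h)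
    have hzS : z ∉ S := hdisj z (List.mem_cons_self)
    set S'' := gstep M q S z with hS''
    set S' := rest.foldl (gstep M q) S'' with hS'
    -- properties of the step
    have hstep : (S'' = insert z S ∧ S.card < q ∧ M.rank (insert z S) = M.rank S + 1)
        ∨ (S'' = S ∧ (q ≤ S.card ∨ M.Spanned z S)) := by
      rw [hS'', gstep]
      by_cases h : S.card < q ∧ M.rank (insert z S) = M.rank S + 1
      · rw [if_pos h]; exact Or.inl ⟨rfl, h⟩
      · rw [if_neg h]
        refine Or.inr ⟨rfl, ?_⟩
        rcases M.spanned_or z S with hs | hs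
        · exact Or.inr hs
        · push_neg at h
          left
          by_contra hq
          push_neg at hq
          exact (h hq) hs
    have hSS'' : S ⊆ S'' := by
      rcases hstep with ⟨h, _⟩ | ⟨h, _⟩
      · rw [h]; exact Finset.subset_insert z S
      · rw [h]
    have hS''sub : S'' ⊆ insert z S := by
      rcases hstep with ⟨h, _⟩ | ⟨h, _⟩
      · rw [h]
      · rw [h]; exact Finset.subset_insert z S
    have hS''card : S''.card ≤ q := by
      rcases hstep with ⟨h, hq, _⟩ | ⟨h, _⟩
      · rw [h, Finset.card_insert_of_notMem hzS]; omega
      · rw [h]; exact hcard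
    have hdisj' : ∀ w ∈ rest, w ∉ S'' := by
      intro w hw hwS
      rcases Finset.mem_insert.mp (hS''sub hwS) with rfl | h
      · exact hznotrest hw
      · exact hdisj w (List.mem_cons_of_mem z hw) h
    obtain ⟨ih1, ih2, ih3, ih4, ih5, ih6⟩ := ih S'' hsort.of_cons hdisj' hS''card
    rw [← hS'] at ih1 ih2 ih3 ih4 ih5 ih6
    have hsub1 : S ⊆ S' := hSS''.trans ih1
    -- the turn set of an element w below z is the same computed from S or S''
    have hTw : ∀ w, w < z → S'' ∪ S'.filter (w < ·) = S ∪ S'.filter (w < ·) := by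
      intro w hw
      rcases hstep with ⟨h, _⟩ | ⟨h, _⟩
      · rw [h]
        have hzf : z ∈ S'.filter (w < ·) := by
          refine Finset.mem_filter.mpr ⟨ih1 ?_, hw⟩
          rw [h]; exact Finset.mem_insert_self z S
        rw [Finset.insert_union, Finset.insert_eq_self.mpr (Finset.mem_union_right S hzf)]
      · rw [h]
    -- the turn set of z itself is S
    have hTz : S ∪ S'.filter (z < ·) = S := by
      apply Finset.union_eq_left.mpr
      intro u hu
      obtain ⟨huS', hzu⟩ := Finset.mem_filter.mp hu
      rcases Finset.mem_union.mp (ih2 huS') with h | h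
      · rcases Finset.mem_insert.mp (hS''sub h) with rfl | h2
        · exact absurd hzu (lt_irrefl _)
        · exact h2
      · exact absurd hzu (not_lt.mpr (le_of_lt (hzrest u (List.mem_toFinset.mp h))))
    refine ⟨hsub1, ?_, ih3, ?_, ?_, ?_⟩
    · -- S' ⊆ S ∪ (z :: rest).toFinset
      refine ih2.trans ?_
      intro u hu
      rcases Finset.mem_union.mp hu with h | h
      · rcases Finset.mem_insert.mp (hS''sub h) with rfl | h2
        · exact Finset.mem_union_right _ (List.mem_toFinset.mpr (List.mem_cons_self))
        · exact Finset.mem_union_left _ h2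
      · exact Finset.mem_union_right _
          (List.mem_toFinset.mpr (List.mem_cons_of_mem _ (List.mem_toFinset.mp h)))
    · -- rejected elements
      intro w hw hwS'
      rcases List.mem_cons.mp hw with rfl | hwrest
      · rw [hTz]
        rcases hstep with ⟨h, _⟩ | ⟨h, hor⟩
        · exact absurd (ih1 (h ▸ Finset.mem_insert_self w S)) hwS'
        · exact hor
      · rw [← hTw w (hzrest w hwrest)]
        exact ih4 w hwrest hwS'
    · -- accepted elements
      intro w hw hwS'
      rcases List.mem_cons.mp hw with rfl | hwrest
      · rw [hTz]
        rcases hstep with ⟨h, hq, hr⟩ | ⟨h, _⟩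
        · exact ⟨hq, hr⟩
        · exfalso
          rcases Finset.mem_union.mp (ih2 hwS') with h2 | h2
          · exact hzS (by rwa [h] at h2)
          · exact hznotrest (List.mem_toFinset.mp h2)
      · rw [← hTw w (hzrest w hwrest)]
        exact ih5 w hwrest hwS'
    · -- basis / rank bookkeeping
      intro B hBS hBi hBc
      rcases hstep with ⟨h, hq, hr⟩ | ⟨h, _⟩
      · have hzB : z ∉ B := fun hz => hzS (hBS hz)
        have hB' : M.Indep (insert z B) := M.indep_insert_basis hr hBS hBi hBc
        have hB'sub : insert z B ⊆ S'' := by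
          rw [h]; exact Finset.insert_subset_insert z hBS
        have hB'card : (insert z B).card = M.rank S'' := by
          rw [Finset.card_insert_of_notMem hzB, h, hr, hBc]
        obtain ⟨k1, k2⟩ := ih6 (insert z B) hB'sub hB' hB'card
        have hzdiff : z ∈ S' := ih1 (h ▸ Finset.mem_insert_self z S)
        have hdiff : S' \ S = insert z (S' \ S'') := by
          rw [h]
          ext u
          simp only [Finset.mem_sdiff, Finset.mem_insert]
          constructor
          · rintro ⟨huS', huS⟩
            by_cases hu : u = z
            · exact Or.inl hu
            · exact Or.inr ⟨huS', fun hc => hc.elim hu huS⟩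
          · rintro (rfl | ⟨huS', huS⟩)
            · exact ⟨hzdiff, hzS⟩
            · exact ⟨huS', fun hc => huS (Or.inr hc)⟩
        have hznd : z ∉ S' \ S'' := by
          simp only [Finset.mem_sdiff, not_and, not_not]
          intro _; rw [h]; exact Finset.mem_insert_self z S
        have hcards : (S' \ S).card = (S' \ S'').card + 1 := by
          rw [hdiff, Finset.card_insert_of_notMem hznd]
        have hrS'' : M.rank S'' = M.rank S + 1 := by rw [h, hr]
        constructor
        · have heq : B ∪ (S' \ S) = insert z B ∪ (S' \ S'') := by
            rw [hdiff, Finset.union_insert, ← Finset.insert_union]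
          rw [heq]; exact k1
        · rw [k2, hrS'', hcards]; ring
      · rw [h] at ih6
        exact ih6 B hBS hBi hBc

end Greedy

section GSel

open FinMatroid

variable {α : Type*} [LinearOrder α]

noncomputable def phase1 (M : FinMatroid α) (q : ℕ) (G A : Finset α) : Finset α :=
  ((A \ G).sort (· ≥ ·)).foldl (gstep M q) (A ∩ G)

noncomputable def topPart (R : Finset α) (t : ℕ) : Finset α :=
  ((R.sort (· ≥ ·)).take t).toFinset

noncomputable def gSel (M : FinMatroid α) (q : ℕ) (G A : Finset α) : Finset α :=
  phase1 M q G A ∪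
    topPart ((A \ G) \ phase1 M q G A) (min A.card q - (phase1 M q G A).card)

lemma inter_union_sdiff_eq (A G : Finset α) : (A ∩ G) ∪ (A \ G) = A := by
  ext u; simp only [Finset.mem_union, Finset.mem_inter, Finset.mem_sdiff]; tauto

lemma phase1_spec (M : FinMatroid α) {q : ℕ} {G : Finset α} (hG : G.card ≤ q) (A : Finset α) :
    A ∩ G ⊆ phase1 M q G A ∧
    phase1 M q G A ⊆ A ∧
    (phase1 M q G A).card ≤ q ∧
    (∀ z ∈ A \ G, z ∉ phase1 M q G A →
      q ≤ ((A ∩ G) ∪ (phase1 M q G A).filter (z < ·)).card ∨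
      M.Spanned z ((A ∩ G) ∪ (phase1 M q G A).filter (z < ·))) ∧
    (∀ z ∈ phase1 M q G A, z ∉ A ∩ G →
      ((A ∩ G) ∪ (phase1 M q G A).filter (z < ·)).card < q ∧
      M.rank (insert z ((A ∩ G) ∪ (phase1 M q G A).filter (z < ·)))
        = M.rank ((A ∩ G) ∪ (phase1 M q G A).filter (z < ·)) + 1) ∧
    (∀ B, B ⊆ A ∩ G → M.Indep B → B.card = M.rank (A ∩ G) →
      M.Indep (B ∪ (phase1 M q G A \ (A ∩ G))) ∧
      M.rank (phase1 M q G A) = M.rank (A ∩ G) + (phase1 M q G A \ (A ∩ G)).card) := by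
  have hsorted : ((A \ G).sort (· ≥ ·)).Pairwise (· > ·) := (Finset.sortedGT_sort _).pairwise
  have hdisj : ∀ z ∈ (A \ G).sort (· ≥ ·), z ∉ A ∩ G := by
    intro z hz hzi
    have := Finset.mem_sdiff.mp ((Finset.mem_sort _).mp hz)
    exact this.2 (Finset.mem_inter.mp hzi).2
  have hcard : (A ∩ G).card ≤ q :=
    le_trans (Finset.card_le_card Finset.inter_subset_right) hG
  obtain ⟨m1, m2, m3, m4, m5, m6⟩ := foldl_master M q ((A \ G).sort (· ≥ ·)) (A ∩ G)
    hsorted hdisj hcard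
  rw [Finset.sort_toFinset] at m2
  rw [show ((A \ G).sort (· ≥ ·)).foldl (gstep M q) (A ∩ G) = phase1 M q G A from rfl]
    at m1 m2 m3 m4 m5 m6
  refine ⟨m1, m2.trans (by rw [inter_union_sdiff_eq]), m3, ?_, ?_, m6⟩
  · intro z hz hz2
    exact m4 z ((Finset.mem_sort _).mpr hz) hz2
  · intro z hz hz2
    have hzl : z ∈ (A \ G).sort (· ≥ ·) := by
      rw [Finset.mem_sort]
      rcases Finset.mem_union.mp (m2 hz) with h | h
      · exact absurd h hz2
      · exact h
    exact m5 z hzl hz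
  
lemma topPart_subset (R : Finset α) (t : ℕ) : topPart R t ⊆ R := by
  intro u hu
  have := List.mem_toFinset.mp hu
  exact (Finset.mem_sort _).mp (List.take_subset _ _ this)

lemma topPart_card (R : Finset α) {t : ℕ} (ht : t ≤ R.card) : (topPart R t).card = t := by
  have hnd : ((R.sort (· ≥ ·)).take t).Nodup :=
    (List.take_sublist _ _).nodup (Finset.sort_nodup _ _)
  rw [topPart, List.toFinset_card_of_nodup hnd, List.length_take, Finset.length_sort]
  omega

lemma topPart_top (R : Finset α) (t : ℕ) {p u : α} (hp : p ∈ topPart R t)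
    (hu : u ∈ R) (hu2 : u ∉ topPart R t) : u < p := by
  have hsorted : ((R.sort (· ≥ ·)).take t ++ (R.sort (· ≥ ·)).drop t).Pairwise (· > ·) := by
    rw [List.take_append_drop]
    exact (Finset.sortedGT_sort _).pairwise
  have hudrop : u ∈ (R.sort (· ≥ ·)).drop t := by
    have hul : u ∈ (R.sort (· ≥ ·)) := (Finset.mem_sort _).mpr hu
    rw [← List.take_append_drop t (R.sort (· ≥ ·)), List.mem_append] at hul
    rcases hul with h | h
    · exact absurd (List.mem_toFinset.mpr h) hu2
    · exact h
  exact (List.pairwise_append.mp hsorted).2.2 p (List.mem_toFinset.mp hp) u hudrop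

end GSel

section Basic

open FinMatroid

variable {α : Type*} [LinearOrder α] (M : FinMatroid α) {q : ℕ} {G : Finset α}

lemma sdiff_phase1 (hG : G.card ≤ q) (A : Finset α) :
    (A \ G) \ phase1 M q G A = A \ phase1 M q G A := by
  obtain ⟨p1, p2, _, _, _, _⟩ := phase1_spec M hG A
  ext u
  simp only [Finset.mem_sdiff]
  constructor
  · rintro ⟨⟨h1, _⟩, h3⟩; exact ⟨h1, h3⟩
  · rintro ⟨h1, h2⟩
    refine ⟨⟨h1, fun hG' => h2 (p1 (Finset.mem_inter.mpr ⟨h1, hG'⟩))⟩, h2⟩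

lemma phase1_card_le (hG : G.card ≤ q) (A : Finset α) :
    (phase1 M q G A).card ≤ min A.card q := by
  obtain ⟨_, p2, p3, _, _, _⟩ := phase1_spec M hG A
  exact le_min (Finset.card_le_card p2) p3

lemma topPart_le_cardR (hG : G.card ≤ q) (A : Finset α) :
    min A.card q - (phase1 M q G A).card ≤ ((A \ G) \ phase1 M q G A).card := by
  obtain ⟨_, p2, _, _, _, _⟩ := phase1_spec M hG A
  rw [sdiff_phase1 M hG A, Finset.card_sdiff_of_subset p2]
  have := Finset.card_le_card p2
  omega

lemma gSel_subset (hG : G.card ≤ q) (A : Finset α) : gSel M q G A ⊆ A := by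
  obtain ⟨_, p2, _, _, _, _⟩ := phase1_spec M hG A
  refine Finset.union_subset p2 ((topPart_subset _ _).trans ?_)
  rw [sdiff_phase1 M hG A]
  exact Finset.sdiff_subset

lemma topPart_disj (hG : G.card ≤ q) (A : Finset α) :
    Disjoint (phase1 M q G A)
      (topPart ((A \ G) \ phase1 M q G A) (min A.card q - (phase1 M q G A).card)) := by
  rw [Finset.disjoint_right]
  intro u hu
  have := topPart_subset _ _ hu
  rw [sdiff_phase1 M hG A] at this
  exact (Finset.mem_sdiff.mp this).2

lemma gSel_card (hG : G.card ≤ q) (A : Finset α) :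
    (gSel M q G A).card = min A.card q := by
  rw [gSel, Finset.card_union_of_disjoint (topPart_disj M hG A),
    topPart_card _ (topPart_le_cardR M hG A)]
  have := phase1_card_le M hG A
  omega

lemma inter_subset_gSel (hG : G.card ≤ q) (A : Finset α) : A ∩ G ⊆ gSel M q G A := by
  obtain ⟨p1, _, _, _, _, _⟩ := phase1_spec M hG A
  exact p1.trans Finset.subset_union_left

lemma gSel_eq_self (hG : G.card ≤ q) {A : Finset α} (hA : A.card ≤ q) :
    gSel M q G A = A := by
  apply Finset.eq_of_subset_of_card_le (gSel_subset M hG A)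
  rw [gSel_card M hG A]
  omega

/-- in the main case, phase-2 members are spanned by their phase-1 turn set -/
lemma topPart_spanned (hG : G.card ≤ q) {A : Finset α} (hq : q < A.card) {u : α}
    (hu : u ∈ topPart ((A \ G) \ phase1 M q G A) (min A.card q - (phase1 M q G A).card)) :
    M.Spanned u ((A ∩ G) ∪ (phase1 M q G A).filter (u < ·)) := by
  obtain ⟨p1, p2, p3, p4, _, _⟩ := phase1_spec M hG A
  have huR := topPart_subset _ _ hu
  have huAG : u ∈ A \ G := (Finset.mem_sdiff.mp huR).1
  have huS : u ∉ phase1 M q G A := (Finset.mem_sdiff.mp huR).2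
  rcases p4 u huAG huS with hcap | hsp
  · exfalso
    have hTsub : (A ∩ G) ∪ (phase1 M q G A).filter (u < ·) ⊆ phase1 M q G A :=
      Finset.union_subset p1 (Finset.filter_subset _ _)
    have h1 := Finset.card_le_card hTsub
    have h2 : (phase1 M q G A).card = q := by omega
    have ht : min A.card q - (phase1 M q G A).card = 0 := by omega
    rw [ht] at hu
    simp [topPart] at hu
  · exact hsp

lemma rank_gSel (hG : G.card ≤ q) {A : Finset α} (hq : q < A.card) :
    M.rank (gSel M q G A) = M.rank (phase1 M q G A) := by
  obtain ⟨p1, _, _, _, _, _⟩ := phase1_spec M hG A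
  refine M.rank_union_spanned ?_
  intro u hu
  refine M.spanned_mono (topPart_spanned M hG hq hu) ?_
  exact Finset.union_subset p1 (Finset.filter_subset _ _)

/-- removing a phase-1 non-guaranteed element drops the rank, provided all
phase-2 elements are above it -/
lemma key_erase (hG : G.card ≤ q) {A : Finset α} (hq : q < A.card) {x : α}
    (hx : x ∈ phase1 M q G A) (hxG : x ∉ A ∩ G)
    (hx2 : ∀ u ∈ topPart ((A \ G) \ phase1 M q G A)
      (min A.card q - (phase1 M q G A).card), x < u) :
    M.rank ((gSel M q G A).erase x) + 1 ≤ M.rank (gSel M q G A) := by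
  obtain ⟨p1, p2, p3, p4, p5, p6⟩ := phase1_spec M hG A
  set S₁ := phase1 M q G A with hS₁
  set G' := A ∩ G with hG'
  set P₁ := S₁ \ G' with hP₁
  set P₂ := topPart ((A \ G) \ S₁) (min A.card q - S₁.card) with hP₂
  obtain ⟨B, hBsub, hBi, hBc⟩ := M.exists_basis G'
  obtain ⟨k1, k2⟩ := p6 B hBsub hBi hBc
  have hxP₁ : x ∈ P₁ := Finset.mem_sdiff.mpr ⟨hx, hxG⟩
  set X₀ := B ∪ P₁.erase x with hX₀
  have hX₀i : M.Indep X₀ :=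
    M.indep_subset k1 (Finset.union_subset_union Finset.Subset.rfl (Finset.erase_subset x P₁))
  have hdisjBP : Disjoint B (P₁.erase x) := by
    rw [Finset.disjoint_right]
    intro u hu
    have := Finset.mem_sdiff.mp (Finset.mem_of_mem_erase hu)
    exact fun hB => this.2 (hBsub hB)
  have hX₀card : X₀.card = B.card + P₁.card - 1 := by
    rw [hX₀, Finset.card_union_of_disjoint hdisjBP, Finset.card_erase_of_mem hxP₁]
    have : 1 ≤ P₁.card := Finset.card_pos.mpr ⟨x, hxP₁⟩
    omega
  -- every guaranteed element is spanned by X₀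
  have hG'sp : ∀ u ∈ G', M.Spanned u X₀ := by
    intro u hu
    refine M.spanned_mono (X := B) ?_ Finset.subset_union_left
    unfold FinMatroid.Spanned
    have h1 : M.rank (insert u B) ≤ M.rank G' :=
      M.rank_mono (Finset.insert_subset hu hBsub)
    have h2 := M.rank_le_rank_insert u B
    have h3 : M.rank B = B.card := M.rank_indep hBi
    omega
  have hYr : M.rank (X₀ ∪ G') = M.rank X₀ := M.rank_union_spanned hG'sp
  -- every phase-2 element is spanned by X₀ ∪ G'
  have hP₂sp : ∀ u ∈ P₂, M.Spanned u (X₀ ∪ G') := by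
    intro u hu
    refine M.spanned_mono (topPart_spanned M hG hq hu) ?_
    refine Finset.union_subset (Finset.subset_union_right) ?_
    intro v hv
    obtain ⟨hvS, huv⟩ := Finset.mem_filter.mp hv
    by_cases hvG : v ∈ G'
    · exact Finset.mem_union_right _ hvG
    · refine Finset.mem_union_left _ (Finset.mem_union_right _ ?_)
      refine Finset.mem_erase.mpr ⟨?_, Finset.mem_sdiff.mpr ⟨hvS, hvG⟩⟩
      have := hx2 u hu
      exact fun h => absurd huv (by rw [h]; exact not_lt.mpr (le_of_lt this))
  have hZr : M.rank ((X₀ ∪ G') ∪ P₂) = M.rank X₀ := by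
    rw [M.rank_union_spanned hP₂sp, hYr]
  have hsub : (gSel M q G A).erase x ⊆ (X₀ ∪ G') ∪ P₂ := by
    intro u hu
    obtain ⟨hux, huD⟩ := Finset.mem_erase.mp hu
    rcases Finset.mem_union.mp huD with h | h
    · by_cases hvG : u ∈ G'
      · exact Finset.mem_union_left _ (Finset.mem_union_right _ hvG)
      · refine Finset.mem_union_left _ (Finset.mem_union_left _ (Finset.mem_union_right _ ?_))
        exact Finset.mem_erase.mpr ⟨hux, Finset.mem_sdiff.mpr ⟨h, hvG⟩⟩
    · exact Finset.mem_union_right _ h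
  have hrD : M.rank (gSel M q G A) = B.card + P₁.card := by
    rw [rank_gSel M hG hq, ← hS₁, k2, ← hBc]
  have h5 : M.rank ((gSel M q G A).erase x) ≤ B.card + P₁.card - 1 := by
    have := M.rank_mono hsub
    rw [hZr] at this
    have h6 := M.rank_le_card X₀
    omega
  have : 1 ≤ P₁.card := Finset.card_pos.mpr ⟨x, hxP₁⟩
  omega

end Basic

section Exist

open FinMatroid

variable {α : Type*} [LinearOrder α] (M : FinMatroid α) {q : ℕ} {G : Finset α}

lemma gSel_main_case (hG : G.card ≤ q) {A : Finset α} (h : ¬ q < A.card) {x : α}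
    (hx : x ∈ A \ gSel M q G A) : False := by
  rw [gSel_eq_self M hG (by omega)] at hx
  simp at hx

lemma phase1_full (hG : G.card ≤ q) {A : Finset α} (hq : q < A.card) {x : α}
    (hxA : x ∈ A \ G) (hxS : x ∉ phase1 M q G A)
    (hcap : q ≤ ((A ∩ G) ∪ (phase1 M q G A).filter (x < ·)).card) :
    (phase1 M q G A).card = q ∧
    topPart ((A \ G) \ phase1 M q G A) (min A.card q - (phase1 M q G A).card) = ∅ := by
  obtain ⟨p1, p2, p3, _, _, _⟩ := phase1_spec M hG A
  have hTsub : (A ∩ G) ∪ (phase1 M q G A).filter (x < ·) ⊆ phase1 M q G A :=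
    Finset.union_subset p1 (Finset.filter_subset _ _)
  have h1 := Finset.card_le_card hTsub
  have h2 : (phase1 M q G A).card = q := by omega
  have ht : min A.card q - (phase1 M q G A).card = 0 := by omega
  rw [ht]
  exact ⟨h2, by simp [topPart]⟩

lemma gSel_axiom_ii (hG : G.card ≤ q) (A : Finset α) :
    ∀ x ∈ A \ gSel M q G A,
      ((gSel M q G A).card < q → M.rank (insert x (gSel M q G A)) = M.rank (gSel M q G A)) ∧
      ((gSel M q G A).card = q → ∀ y ∈ gSel M q G A \ G,
        M.rank (insert x ((gSel M q G A).erase y)) ≤ M.rank (gSel M q G A)) := by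
  intro x hx
  by_cases hq : q < A.card
  swap
  · exact absurd hx (fun h => gSel_main_case M hG hq h)
  obtain ⟨p1, p2, p3, p4, p5, p6⟩ := phase1_spec M hG A
  obtain ⟨hxA, hxD⟩ := Finset.mem_sdiff.mp hx
  have hxG : x ∉ G := fun h =>
    hxD (inter_subset_gSel M hG A (Finset.mem_inter.mpr ⟨hxA, h⟩))
  have hxS : x ∉ phase1 M q G A := fun h => hxD (Finset.mem_union_left _ h)
  constructor
  · intro hlt
    exfalso
    rw [gSel_card M hG A] at hlt
    exact gSel_main_case M hG (by omega) hx
  · intro hcard y hy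
    obtain ⟨hyD, hyG⟩ := Finset.mem_sdiff.mp hy
    rcases p4 x (Finset.mem_sdiff.mpr ⟨hxA, hxG⟩) hxS with hcap | hsp
    · -- capacity was full: phase 2 empty, use key_erase on y
      obtain ⟨hfull, hP₂e⟩ := phase1_full M hG hq (Finset.mem_sdiff.mpr ⟨hxA, hxG⟩) hxS hcap
      have hyS : y ∈ phase1 M q G A := by
        rcases Finset.mem_union.mp hyD with h | h
        · exact h
        · rw [hP₂e] at h; simp at h
      have hyG' : y ∉ A ∩ G := fun h => hyG (Finset.mem_inter.mp h).2
      have hkey := key_erase M hG hq hyS hyG' (by rw [hP₂e]; simp)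
      have := M.rank_insert_le x ((gSel M q G A).erase y)
      omega
    · -- x is spanned by the phase-1 run
      have hxsp : M.Spanned x (gSel M q G A) := by
        refine M.spanned_mono hsp ?_
        refine Finset.union_subset (inter_subset_gSel M hG A) ?_
        exact (Finset.filter_subset _ _).trans Finset.subset_union_left
      have h1 : M.rank (insert x ((gSel M q G A).erase y)) ≤
          M.rank (insert x (gSel M q G A)) :=
        M.rank_mono (Finset.insert_subset_insert x (Finset.erase_subset y _))
      rw [hxsp] at h1
      exact h1

lemma gSel_axiom_iii (hG : G.card ≤ q) (A : Finset α) :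
    ∀ x ∈ gSel M q G A \ G, ∀ y ∈ A \ gSel M q G A, y > x →
      M.rank (insert y ((gSel M q G A).erase x)) < M.rank (gSel M q G A) := by
  intro x hx y hy hyx
  by_cases hq : q < A.card
  swap
  · exact absurd hy (fun h => gSel_main_case M hG hq h)
  obtain ⟨p1, p2, p3, p4, p5, p6⟩ := phase1_spec M hG A
  obtain ⟨hxD, hxG⟩ := Finset.mem_sdiff.mp hx
  obtain ⟨hyA, hyD⟩ := Finset.mem_sdiff.mp hy
  have hyG : y ∉ G := fun h =>
    hyD (inter_subset_gSel M hG A (Finset.mem_inter.mpr ⟨hyA, h⟩))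
  have hyS : y ∉ phase1 M q G A := fun h => hyD (Finset.mem_union_left _ h)
  have hyR : y ∈ (A \ G) \ phase1 M q G A :=
    Finset.mem_sdiff.mpr ⟨Finset.mem_sdiff.mpr ⟨hyA, hyG⟩, hyS⟩
  have hyP₂ : y ∉ topPart ((A \ G) \ phase1 M q G A)
      (min A.card q - (phase1 M q G A).card) :=
    fun h => hyD (Finset.mem_union_right _ h)
  -- x must be a phase-1 element
  have hxS : x ∈ phase1 M q G A := by
    rcases Finset.mem_union.mp hxD with h | h
    · exact h
    · exact absurd (topPart_top _ _ h hyR hyP₂) (lt_asymm hyx)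
  have hxG' : x ∉ A ∩ G := fun h => hxG (Finset.mem_inter.mp h).2
  -- phase-2 elements are all above x
  have hx2 : ∀ u ∈ topPart ((A \ G) \ phase1 M q G A)
      (min A.card q - (phase1 M q G A).card), x < u := by
    intro u hu
    exact lt_trans hyx (topPart_top _ _ hu hyR hyP₂)
  have hkey := key_erase M hG hq hxS hxG' hx2
  -- y is spanned at its phase-1 turn
  have hsp : M.Spanned y ((A ∩ G) ∪ (phase1 M q G A).filter (y < ·)) := by
    rcases p4 y (Finset.mem_sdiff.mpr ⟨hyA, hyG⟩) hyS with hcap | hsp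
    · exfalso
      have hxT : x ∉ (A ∩ G) ∪ (phase1 M q G A).filter (y < ·) := by
        intro h
        rcases Finset.mem_union.mp h with h | h
        · exact hxG' h
        · exact absurd (Finset.mem_filter.mp h).2 (lt_asymm hyx)
      have hsub : (A ∩ G) ∪ (phase1 M q G A).filter (y < ·) ⊆
          (phase1 M q G A).erase x := by
        intro v hv
        refine Finset.mem_erase.mpr ⟨fun hvx => hxT (hvx ▸ hv), ?_⟩
        rcases Finset.mem_union.mp hv with h | h
        · exact p1 h
        · exact (Finset.mem_filter.mp h).1
      have h1 := Finset.card_le_card hsub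
      have h2 : ((phase1 M q G A).erase x).card + 1 = (phase1 M q G A).card :=
        Finset.card_erase_add_one hxS
      omega
    · exact hsp
  have hspD : M.Spanned y ((gSel M q G A).erase x) := by
    refine M.spanned_mono hsp ?_
    intro v hv
    refine Finset.mem_erase.mpr ⟨?_, ?_⟩
    · rintro rfl
      rcases Finset.mem_union.mp hv with h | h
      · exact hxG' h
      · exact absurd (Finset.mem_filter.mp h).2 (lt_asymm hyx)
    · rcases Finset.mem_union.mp hv with h | h
      · exact inter_subset_gSel M hG A h
      · exact Finset.mem_union_left _ (Finset.mem_filter.mp h).1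
  rw [FinMatroid.Spanned] at hspD
  omega

end Exist

section Uniq

open FinMatroid

variable {α : Type*} [LinearOrder α] (M : FinMatroid α) {q : ℕ} {G : Finset α}

lemma phase1_subset_C (hG : G.card ≤ q) {A C : Finset α} (hq : q < A.card)
    (hCA : C ⊆ A) (hCG : A ∩ G ⊆ C)
    (hii : ∀ x ∈ A \ C, ∀ y ∈ C \ G, M.rank (insert x (C.erase y)) ≤ M.rank C)
    (hiii : ∀ x ∈ C \ G, ∀ y ∈ A \ C, y > x →
      M.rank (insert y (C.erase x)) < M.rank C)
    (hcard : C.card = q) :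
    phase1 M q G A ⊆ C := by
  obtain ⟨p1, p2, p3, p4, p5, p6⟩ := phase1_spec M hG A
  by_contra hne
  have hbad : ((phase1 M q G A) \ C).Nonempty := by
    rw [Finset.sdiff_nonempty]; exact hne
  set z := ((phase1 M q G A) \ C).max' hbad with hzdef
  have hzmem := Finset.max'_mem _ hbad
  obtain ⟨hzS, hzC⟩ := Finset.mem_sdiff.mp hzmem
  have hIH : ∀ u ∈ phase1 M q G A, z < u → u ∈ C := by
    intro u hu hzu
    by_contra huC
    exact absurd (Finset.le_max' _ u (Finset.mem_sdiff.mpr ⟨hu, huC⟩)) (not_le.mpr hzu)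
  have hzA : z ∈ A := p2 hzS
  have hzG' : z ∉ A ∩ G := fun h => hzC (hCG h)
  obtain ⟨hTcard, hTrank⟩ := p5 z hzS hzG'
  set T := (A ∩ G) ∪ (phase1 M q G A).filter (z < ·) with hT
  set V := (A ∩ G) ∪ C.filter (z < ·) with hV
  have hTV : T ⊆ V := by
    refine Finset.union_subset_union Finset.Subset.rfl ?_
    intro u hu
    obtain ⟨h1, h2⟩ := Finset.mem_filter.mp hu
    exact Finset.mem_filter.mpr ⟨hIH u h1 h2, h2⟩
  have hVC : V ⊆ C := Finset.union_subset hCG (Finset.filter_subset _ _)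
  have hTC : T ⊆ C := hTV.trans hVC
  have hzV : z ∉ V := by
    intro h
    rcases Finset.mem_union.mp h with h | h
    · exact hzG' h
    · exact hzC (Finset.mem_filter.mp h).1
  -- every element of V is spanned by T
  have hall : ∀ u ∈ V, M.Spanned u T := by
    intro u hu
    by_cases huT : u ∈ T
    · exact M.spanned_of_mem huT
    rcases Finset.mem_union.mp hu with h | h
    · exact absurd (Finset.mem_union_left _ h) huT
    obtain ⟨huC, hzu⟩ := Finset.mem_filter.mp h
    have huG' : u ∉ A ∩ G := fun hh => huT (Finset.mem_union_left _ hh)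
    have huS : u ∉ phase1 M q G A := by
      intro hh
      exact huT (Finset.mem_union_right _ (Finset.mem_filter.mpr ⟨hh, hzu⟩))
    have huA : u ∈ A := hCA huC
    have huG : u ∉ G := fun hh => huG' (Finset.mem_inter.mpr ⟨huA, hh⟩)
    have hTuT : (A ∩ G) ∪ (phase1 M q G A).filter (u < ·) ⊆ T := by
      refine Finset.union_subset Finset.subset_union_left ?_
      intro v hv
      obtain ⟨h1, h2⟩ := Finset.mem_filter.mp hv
      exact Finset.mem_union_right _ (Finset.mem_filter.mpr ⟨h1, lt_trans hzu h2⟩)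
    rcases p4 u (Finset.mem_sdiff.mpr ⟨huA, huG⟩) huS with hcap | hsp
    · exfalso
      have := Finset.card_le_card hTuT
      omega
    · exact M.spanned_mono hsp hTuT
  have hzVrank : M.rank (insert z V) = M.rank V + 1 := by
    have h1 := M.rank_insert_union_spanned hTrank hall
    rwa [Finset.union_eq_right.mpr hTV] at h1
  by_cases hCV : C ⊆ V
  · -- C = V : use axiom (ii)
    have hCeqV : C = V := Finset.Subset.antisymm hCV hVC
    have hnots : ¬ C ⊆ T := by
      intro h
      have := Finset.card_le_card h
      omega
    obtain ⟨y, hyC, hyT⟩ := Finset.not_subset.mp hnots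
    have hyG : y ∉ G := fun hh =>
      hyT (Finset.mem_union_left _ (Finset.mem_inter.mpr ⟨hCA hyC, hh⟩))
    have hysp : M.Spanned y T := hall y (hCeqV ▸ hyC)
    have hTey : T ⊆ C.erase y := by
      intro v hv
      exact Finset.mem_erase.mpr ⟨fun h => hyT (h ▸ hv), hTC hv⟩
    have hyer : M.rank (C.erase y) = M.rank C := by
      have h1 : M.Spanned y (C.erase y) := M.spanned_mono hysp hTey
      rw [FinMatroid.Spanned, Finset.insert_erase hyC] at h1
      omega
    have hzer : M.rank (insert z (C.erase y)) = M.rank (C.erase y) + 1 := by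
      rcases M.spanned_or z (C.erase y) with h | h
      · exfalso
        have h2 : M.Spanned z C := M.spanned_mono h (Finset.erase_subset y C)
        rw [hCeqV] at h2
        rw [FinMatroid.Spanned] at h2
        omega
      · exact h
    have := hii z (Finset.mem_sdiff.mpr ⟨hzA, hzC⟩) y (Finset.mem_sdiff.mpr ⟨hyC, hyG⟩)
    omega
  · -- pick a witness w below z via a cardinality argument
    obtain ⟨w₀, hw₀C, hw₀V⟩ := Finset.not_subset.mp hCV
    obtain ⟨BV, hBVsub, hBVi, hBVc⟩ := M.exists_basis V
    have hzBV : z ∉ BV := fun h => hzV (hBVsub h)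
    have hBzi : M.Indep (insert z BV) := M.indep_insert_basis hzVrank hBVsub hBVi hBVc
    have hBzcard : (insert z BV).card = M.rank V + 1 := by
      rw [Finset.card_insert_of_notMem hzBV, hBVc]
    set s := max (M.rank C) (M.rank V + 1) with hs
    have hsub0 : insert z BV ⊆ insert z C :=
      Finset.insert_subset_insert z (hBVsub.trans hVC)
    have hsle : s ≤ M.rank (insert z C) := by
      refine max_le ?_ ?_
      · exact M.rank_mono (Finset.subset_insert z C)
      · rw [← hzVrank]
        exact M.rank_mono (Finset.insert_subset_insert z hVC)
    obtain ⟨I, hI1, hI2, hI3, hI4⟩ := M.extend_card (s := s) hBzi hsub0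
      (by rw [hBzcard]; exact le_max_right _ _) hsle
    have hIcap : I ∩ insert z V = insert z BV := by
      refine (Finset.eq_of_subset_of_card_le ?_ ?_).symm
      · exact Finset.subset_inter hI1 (Finset.insert_subset_insert z hBVsub)
      · have h1 : M.Indep (I ∩ insert z V) := M.indep_subset hI3 Finset.inter_subset_left
        have h2 := M.indep_card_le_rank h1 Finset.inter_subset_right
        rw [hzVrank] at h2
        omega
    -- counting: some element of C avoids both I and V
    have hcount : ¬ C ⊆ I ∪ V := by
      intro hsubIV
      have hsub2 : C ⊆ (I \ insert z BV) ∪ V := by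
        intro u huC
        rcases Finset.mem_union.mp (hsubIV huC) with h | h
        · by_cases huV : u ∈ V
          · exact Finset.mem_union_right _ huV
          refine Finset.mem_union_left _ (Finset.mem_sdiff.mpr ⟨h, ?_⟩)
          intro hm
          rcases Finset.mem_insert.mp hm with rfl | hm2
          · exact hzC huC
          · exact huV (hBVsub hm2)
        · exact Finset.mem_union_right _ h
      have hc1 := Finset.card_le_card hsub2
      have hc2 := Finset.card_union_le (I \ insert z BV) V
      have hc3 : (I \ insert z BV).card = s - (M.rank V + 1) := by
        rw [Finset.card_sdiff_of_subset hI1, hI4, hBzcard]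
      have hc4 : V.card < C.card :=
        Finset.card_lt_card (Finset.ssubset_iff_of_subset hVC |>.mpr ⟨w₀, hw₀C, hw₀V⟩)
      have hc5 : M.rank C ≤ M.rank V + (C \ V).card := by
        have := M.rank_union_le V (C \ V)
        rwa [Finset.union_sdiff_of_subset hVC] at this
      have hc6 : (C \ V).card = C.card - V.card := Finset.card_sdiff_of_subset hVC
      have hc7 : M.rank V + 1 ≤ s := le_max_right _ _
      rcases max_cases (M.rank C) (M.rank V + 1) with ⟨h8, h9⟩ | ⟨h8, h9⟩ <;> omega
    obtain ⟨w, hwC, hwIV⟩ := Finset.not_subset.mp hcount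
    have hwI : w ∉ I := fun h => hwIV (Finset.mem_union_left _ h)
    have hwV : w ∉ V := fun h => hwIV (Finset.mem_union_right _ h)
    have hwG : w ∉ G := fun hh =>
      hwV (Finset.mem_union_left _ (Finset.mem_inter.mpr ⟨hCA hwC, hh⟩))
    have hwz : w < z := by
      rcases lt_trichotomy w z with h | h | h
      · exact h
      · exact absurd (h ▸ hwC : z ∈ C) hzC
      · exact absurd (Finset.mem_union_right _ (Finset.mem_filter.mpr ⟨hwC, h⟩)) hwV
    have hneg := hiii w (Finset.mem_sdiff.mpr ⟨hwC, hwG⟩)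
      z (Finset.mem_sdiff.mpr ⟨hzA, hzC⟩) hwz
    have hpos : M.rank C ≤ M.rank (insert z (C.erase w)) := by
      have hIsub : I ⊆ insert z (C.erase w) := by
        intro u huI
        rcases Finset.mem_insert.mp (hI2 huI) with rfl | h
        · exact Finset.mem_insert_self _ _
        · refine Finset.mem_insert_of_mem (Finset.mem_erase.mpr ⟨?_, h⟩)
          rintro rfl
          exact hwI huI
      have := M.indep_card_le_rank hI3 hIsub
      rw [hI4] at this
      exact le_trans (le_max_left _ _) this
    omega

lemma topPart_subset_C (hG : G.card ≤ q) {A C : Finset α} (hq : q < A.card)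
    (hCA : C ⊆ A) (hCG : A ∩ G ⊆ C)
    (hii : ∀ x ∈ A \ C, ∀ y ∈ C \ G, M.rank (insert x (C.erase y)) ≤ M.rank C)
    (hiii : ∀ x ∈ C \ G, ∀ y ∈ A \ C, y > x →
      M.rank (insert y (C.erase x)) < M.rank C)
    (hcard : C.card = q) :
    topPart ((A \ G) \ phase1 M q G A) (min A.card q - (phase1 M q G A).card) ⊆ C := by
  obtain ⟨p1, p2, p3, p4, p5, p6⟩ := phase1_spec M hG A
  have hS₁C := phase1_subset_C M hG hq hCA hCG hii hiii hcard
  intro z hz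
  by_contra hzC
  have hzD : z ∈ gSel M q G A := Finset.mem_union_right _ hz
  have hzR := topPart_subset _ _ hz
  obtain ⟨hzAG, hzS⟩ := Finset.mem_sdiff.mp hzR
  obtain ⟨hzA, hzG⟩ := Finset.mem_sdiff.mp hzAG
  -- find w ∈ C \ gSel
  have hnots : ¬ C ⊆ gSel M q G A := by
    intro h
    have hceq : C = gSel M q G A := Finset.eq_of_subset_of_card_le h
      (by rw [gSel_card M hG A, hcard]; omega)
    exact hzC (hceq ▸ hzD)
  obtain ⟨w, hwC, hwD⟩ := Finset.not_subset.mp hnots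
  have hwA : w ∈ A := hCA hwC
  have hwG : w ∉ G := fun hh =>
    hwD (inter_subset_gSel M hG A (Finset.mem_inter.mpr ⟨hwA, hh⟩))
  have hwS : w ∉ phase1 M q G A := fun h => hwD (Finset.mem_union_left _ h)
  have hwR : w ∈ (A \ G) \ phase1 M q G A :=
    Finset.mem_sdiff.mpr ⟨Finset.mem_sdiff.mpr ⟨hwA, hwG⟩, hwS⟩
  have hwP₂ : w ∉ topPart ((A \ G) \ phase1 M q G A)
      (min A.card q - (phase1 M q G A).card) :=
    fun h => hwD (Finset.mem_union_right _ h)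
  have hwz : w < z := topPart_top _ _ hz hwR hwP₂
  have hneg := hiii w (Finset.mem_sdiff.mpr ⟨hwC, hwG⟩)
    z (Finset.mem_sdiff.mpr ⟨hzA, hzC⟩) hwz
  -- z is spanned by its phase-1 turn set, which lies inside C.erase w
  have hzsp := topPart_spanned M hG hq hz
  have hTsub : ∀ u : α, (A ∩ G) ∪ (phase1 M q G A).filter (u < ·) ⊆ C.erase w := by
    intro u
    intro v hv
    have hvS : v ∈ phase1 M q G A ∨ v ∈ A ∩ G := by
      rcases Finset.mem_union.mp hv with h | h
      · exact Or.inr h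
      · exact Or.inl (Finset.mem_filter.mp h).1
    have hvC : v ∈ C := by
      rcases hvS with h | h
      · exact hS₁C h
      · exact hCG h
    refine Finset.mem_erase.mpr ⟨?_, hvC⟩
    rintro rfl
    rcases hvS with h | h
    · exact hwS h
    · exact hwG (Finset.mem_inter.mp h).2
  have hz2 : M.Spanned z (C.erase w) := M.spanned_mono hzsp (hTsub z)
  -- w is also spanned at its phase-1 turn
  have hwsp : M.Spanned w ((A ∩ G) ∪ (phase1 M q G A).filter (w < ·)) := by
    rcases p4 w (Finset.mem_sdiff.mpr ⟨hwA, hwG⟩) hwS with hcap | hsp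
    · exfalso
      obtain ⟨_, hP₂e⟩ := phase1_full M hG hq (Finset.mem_sdiff.mpr ⟨hwA, hwG⟩) hwS hcap
      rw [hP₂e] at hz
      simp at hz
    · exact hsp
  have hw2 : M.Spanned w (C.erase w) := M.spanned_mono hwsp (hTsub w)
  rw [FinMatroid.Spanned, Finset.insert_erase hwC] at hw2
  rw [FinMatroid.Spanned] at hz2
  omega

end Uniq


/-- There is exactly one choice rule satisfying guaranteed enrollment,
maximal utilization of reservations, no justified envy under reserves, and
non-wastefulness (the guaranteed-enrollment choice rule). -/
theorem guaranteedEnrollment_characterization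
    {α : Type*} [Fintype α] [LinearOrder α]
    (M : FinMatroid α) (q : ℕ) (G : Finset α) (hG : G.card ≤ q) :
    ∃! C : Finset α → Finset α,
      (∀ A : Finset α, C A ⊆ A) ∧
      -- (i) guaranteed enrollment for returning students
      (∀ A : Finset α, A ∩ G ⊆ C A) ∧
      -- (ii) maximal utilization of reservations
      (∀ A : Finset α, ∀ x ∈ A \ C A,
        ((C A).card < q → M.rank (insert x (C A)) = M.rank (C A)) ∧
        ((C A).card = q → ∀ y ∈ C A \ G,
          M.rank (insert x ((C A).erase y)) ≤ M.rank (C A))) ∧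
      -- (iii) no justified envy under reserves
      (∀ A : Finset α, ∀ x ∈ C A \ G, ∀ y ∈ A \ C A,
        y > x → M.rank (insert y ((C A).erase x)) < M.rank (C A)) ∧
      -- (iv) non-wastefulness
      (∀ A : Finset α, (C A).card = min A.card q) := by
  refine ⟨gSel M q G, ⟨?_, ?_, ?_, ?_, ?_⟩, ?_⟩
  · exact fun A => gSel_subset M hG A
  · exact fun A => inter_subset_gSel M hG A
  · exact fun A => gSel_axiom_ii M hG A
  · exact fun A => gSel_axiom_iii M hG A
  · exact fun A => gSel_card M hG A
  · rintro C' ⟨h0, h1, h2, h3, h4⟩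
    funext A
    by_cases hq : q < A.card
    · have hcard : (C' A).card = q := by
        rw [h4 A]; omega
      have hii' : ∀ x ∈ A \ C' A, ∀ y ∈ C' A \ G,
          M.rank (insert x ((C' A).erase y)) ≤ M.rank (C' A) :=
        fun x hx y hy => ((h2 A x hx).2 hcard) y hy
      have hp1 := phase1_subset_C M hG hq (h0 A) (h1 A) hii' (h3 A) hcard
      have hp2 := topPart_subset_C M hG hq (h0 A) (h1 A) hii' (h3 A) hcard
      have hsub : gSel M q G A ⊆ C' A := by
        rw [gSel]
        exact Finset.union_subset hp1 hp2
      refine (Finset.eq_of_subset_of_card_le hsub ?_).symm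
      rw [hcard, gSel_card M hG A]
      omega
    · have hCA : C' A = A := by
        refine Finset.eq_of_subset_of_card_le (h0 A) ?_
        rw [h4 A]
        omega
      rw [hCA, gSel_eq_self M hG (by omega)]
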